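/- Let n > 1 and λ2, λ3, k > 0. If λ2 * (n-1)^((n-1)/n) < n * k * λ3, then 0 is the unique nonnegative zero of f(x) = λ2 * x^n/(λ3^n + x^n) - k x, and moreover f(x) < 0 for all x > 0. -/

import Mathlib

open Real

theorem stmt_3 (n lam2 lam3 k : ℝ) (hn : 1 < n) (h2 : 0 < lam2) (h3 : 0 < lam3)
    (hk : 0 < k)
    (f : ℝ → ℝ) (hf : ∀ x, f x = lam2 * x ^ n / (lam3 ^ n + x ^ n) - k * x)
    (hcond : lam2 * (n - 1) ^ ((n - 1) / n) < n * k * lam3) :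
    (∀ x, 0 ≤ x → (f x = 0 ↔ x = 0)) ∧ ∀ x, 0 < x → f x < 0 := by
  have hn0 : (0:ℝ) < n := lt_trans one_pos hn
  have hn0' : n ≠ 0 := ne_of_gt hn0
  have hn1 : (0:ℝ) < n - 1 := by linarith
  have hn1' : n - 1 ≠ 0 := ne_of_gt hn1
  have hpow : (0:ℝ) < (n - 1) ^ ((n - 1) / n) := Real.rpow_pos_of_pos hn1 _
  -- key inequality
  have key : ∀ x : ℝ, 0 < x → lam2 * x ^ (n-1) < k * lam3 ^ n + k * x ^ n := by
    intro x hx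
    have hw1 : (0:ℝ) ≤ (n-1)/n := by positivity
    have hw2 : (0:ℝ) ≤ 1/n := by positivity
    have hp1 : (0:ℝ) ≤ k*n/(n-1) * x ^ n := by positivity
    have hp2 : (0:ℝ) ≤ k*n * lam3 ^ n := by positivity
    have hsum : (n-1)/n + 1/n = 1 := by field_simp; ring
    have hgm := Real.geom_mean_le_arith_mean2_weighted hw1 hw2 hp1 hp2 hsum
    have hkn : (0:ℝ) < k*n := by positivity
    have hAB : (k*n) ^ ((n-1)/n) * (k*n) ^ (1/n) = k*n := by
      rw [← Real.rpow_add hkn, hsum, Real.rpow_one]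
    have e1 : n * ((n-1)/n) = n - 1 := by field_simp
    have e2 : n * (1/n) = 1 := by field_simp
    have hL : (k*n/(n-1) * x ^ n) ^ ((n-1)/n) * (k*n * lam3 ^ n) ^ (1/n)
        = (n * k * lam3 / (n-1) ^ ((n-1)/n)) * x ^ (n-1) := by
      rw [Real.mul_rpow (by positivity) (by positivity),
          Real.mul_rpow (le_of_lt hkn) (by positivity),
          Real.div_rpow (le_of_lt hkn) (le_of_lt hn1),
          ← Real.rpow_mul hx.le, ← Real.rpow_mul h3.le, e1, e2, Real.rpow_one]
      field_simp
      linear_combination hAB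
    have hR : (n-1)/n * (k*n/(n-1) * x ^ n) + 1/n * (k*n * lam3 ^ n)
        = k * x ^ n + k * lam3 ^ n := by
      field_simp
    rw [hL, hR] at hgm
    have hx1 : (0:ℝ) < x ^ (n-1) := Real.rpow_pos_of_pos hx _
    have h4 : lam2 < n * k * lam3 / (n-1) ^ ((n-1)/n) := by
      rw [lt_div_iff₀ hpow]; linarith
    calc lam2 * x ^ (n-1) < (n * k * lam3 / (n-1) ^ ((n-1)/n)) * x ^ (n-1) :=
          mul_lt_mul_of_pos_right h4 hx1
      _ ≤ k * x ^ n + k * lam3 ^ n := hgm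
      _ = k * lam3 ^ n + k * x ^ n := by ring
  have hneg : ∀ x, 0 < x → f x < 0 := by
    intro x hx
    rw [hf]
    have hD : (0:ℝ) < lam3 ^ n + x ^ n := by positivity
    rw [sub_neg, div_lt_iff₀ hD]
    have hxn : x ^ (n-1) * x = x ^ n := by
      nth_rewrite 2 [show x = x ^ (1:ℝ) by rw [Real.rpow_one]]
      rw [← Real.rpow_add hx]; ring_nf
    nlinarith [mul_lt_mul_of_pos_left (key x hx) hx, hxn]
  refine ⟨fun x hx => ?_, hneg⟩
  constructor
  · intro hfx
    by_contra hx0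
    have hxpos : 0 < x := lt_of_le_of_ne hx (Ne.symm hx0)
    exact absurd hfx (ne_of_lt (hneg x hxpos))
  · intro h
    subst h
    rw [hf, Real.zero_rpow hn0']
    simp
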